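/- arXiv:1101.0530 — 4 statements merged into one kernel-verified Lean document; each statement's English description precedes it below -/
import Mathlib

section
/- Let p and h be integers with p ≥ 5 and h ≥ 2, and set a = (p−3)(h−1)+1. Let β be the greatest real root of the polynomial P(X) = X² − a·X − (h−3). Then every root z of P with z ≠ β satisfies |z| < 1; that is, β is greater than 1 and all other roots of P lie strictly inside the unit circle, so P is a Pisot polynomial. -/
/-- For integers `p ≥ 5` and `h ≥ 2`, with `a = (p-3)(h-1)+1`, if `β` is the
greatest real root of `P(X) = X² - a·X - (h-3)`, then `β > 1` and every
complex root `z ≠ β` of `P` satisfies `|z| < 1`: `P` is a Pisot polynomial. -/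
theorem quadratic_is_pisot (p h : ℤ) (hp : 5 ≤ p) (hh : 2 ≤ h)
    (a : ℝ) (ha : a = ((p : ℝ) - 3) * ((h : ℝ) - 1) + 1)
    (β : ℝ) (hroot : β ^ 2 - a * β - ((h : ℝ) - 3) = 0)
    (hmax : ∀ x : ℝ, x ^ 2 - a * x - ((h : ℝ) - 3) = 0 → x ≤ β) :
    1 < β ∧
      ∀ z : ℂ, z ^ 2 - (a : ℂ) * z - ((h : ℂ) - 3) = 0 → z ≠ (β : ℂ) →
        ‖z‖ < 1 := by
  have hpr : (5:ℝ) ≤ (p:ℝ) := by exact_mod_cast hp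
  have hhr : (2:ℝ) ≤ (h:ℝ) := by exact_mod_cast hh
  have hpm : (0:ℝ) ≤ ((p:ℝ) - 5) * ((h:ℝ) - 2) := by nlinarith
  have ha3 : 3 ≤ a := by nlinarith
  set γ : ℝ := a - β with hγ
  have hγroot : γ ^ 2 - a * γ - ((h:ℝ) - 3) = 0 := by
    simp only [hγ]; nlinarith [hroot]
  have hγβ : γ ≤ β := hmax γ hγroot
  have hprodR : β * γ = -((h:ℝ) - 3) := by simp only [hγ]; nlinarith [hroot]
  have hβ1 : 1 < β := by
    by_contra hle
    push_neg at hle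
    nlinarith [hprodR]
  have hγlt : γ < 1 := by nlinarith [hprodR]
  have hγgt : -1 < γ := by nlinarith [hprodR]
  refine ⟨hβ1, ?_⟩
  intro z hz hne
  have h1 : ((β:ℂ) + (γ:ℂ)) = (a:ℂ) := by push_cast [hγ]; ring
  have h2 : (β:ℂ) * (γ:ℂ) = -(((h:ℂ)) - 3) := by
    have := congrArg (Complex.ofReal ·) hprodR
    push_cast at this
    exact this
  have hfac : (z - (β:ℂ)) * (z - (γ:ℂ)) = 0 := by
    linear_combination hz - z * h1 + h2
  rcases mul_eq_zero.mp hfac with hcase | hcase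
  · exact absurd (sub_eq_zero.mp hcase) hne
  · have hzγ : z = (γ:ℂ) := sub_eq_zero.mp hcase
    rw [hzγ, Complex.norm_real, Real.norm_eq_abs]
    exact abs_lt.mpr ⟨hγgt, hγlt⟩
end

section
/- Let p and h be integers with p ≥ 5 and h ≥ 2, set a = (p−3)(h−1)+1 and c = (p−2)(h−1)−2, and let β be the greatest real root of the polynomial P(X) = X³ − a·X² − c·X − (h−3). Then every complex root z of P with z ≠ β satisfies |z| < 1; that is, P is a Pisot polynomial. -/
set_option maxHeartbeats 1000000


/-- For integers `p ≥ 5` and `h ≥ 2`, with `a = (p-3)(h-1)+1` and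
`c = (p-2)(h-1)-2`, if `β` is the greatest real root of
`P(X) = X³ - a·X² - c·X - (h-3)`, then every complex root `z ≠ β` of `P`
satisfies `|z| < 1`: `P` is a Pisot polynomial. -/
theorem cubic_is_pisot (p h : ℤ) (hp : 5 ≤ p) (hh : 2 ≤ h)
    (a c : ℝ) (ha : a = ((p : ℝ) - 3) * ((h : ℝ) - 1) + 1)
    (hc : c = ((p : ℝ) - 2) * ((h : ℝ) - 1) - 2)
    (β : ℝ) (hroot : β ^ 3 - a * β ^ 2 - c * β - ((h : ℝ) - 3) = 0)
    (hmax : ∀ x : ℝ, x ^ 3 - a * x ^ 2 - c * x - ((h : ℝ) - 3) = 0 → x ≤ β) :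
    1 < β ∧
      ∀ z : ℂ, z ^ 3 - (a : ℂ) * z ^ 2 - (c : ℂ) * z - ((h : ℂ) - 3) = 0 →
        z ≠ (β : ℂ) → ‖z‖ < 1 := by
  have hP : (5:ℝ) ≤ (p:ℝ) := by exact_mod_cast hp
  have hH : (2:ℝ) ≤ (h:ℝ) := by exact_mod_cast hh
  set H : ℝ := (h:ℝ) with hHdef
  set P : ℝ := (p:ℝ) with hPdef
  have hprod : 0 ≤ (P - 5) * (H - 1) := by
    apply mul_nonneg <;> linarith
  have ha3 : 3 ≤ a := by nlinarith [hprod]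
  have hc1 : 1 ≤ c := by nlinarith [hprod]
  set M : ℝ := a + c + H with hMdef
  have hM6 : 6 ≤ M := by linarith
  have hfM : 0 < M^3 - a*M^2 - c*M - (H-3) := by
    nlinarith [mul_nonneg (mul_nonneg (by linarith : (0:ℝ) ≤ M) (by linarith : (0:ℝ) ≤ M - 6)) (by linarith : (0:ℝ) ≤ c + H), mul_nonneg (by linarith : (0:ℝ) ≤ c - 1) (by linarith : (0:ℝ) ≤ M)]
  have key : ∀ r : ℝ, r^3 - a*r^2 - c*r - (H-3) < 0 → r ≤ M → r < β := by
    intro r hr hrM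
    have hcont : ContinuousOn (fun x : ℝ => x^3 - a*x^2 - c*x - (H-3)) (Set.Icc r M) := by
      apply Continuous.continuousOn; continuity
    have hsub := intermediate_value_Icc hrM hcont
    have h0 : (0:ℝ) ∈ Set.Icc (r^3 - a*r^2 - c*r - (H-3)) (M^3 - a*M^2 - c*M - (H-3)) :=
      ⟨hr.le, hfM.le⟩
    obtain ⟨x₀, hx₀mem, hx₀⟩ := hsub h0
    simp only at hx₀
    have hx₀β := hmax x₀ hx₀
    have hne : x₀ ≠ r := by
      intro hxr
      rw [hxr] at hx₀
      linarith
    have := hx₀mem.1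
    rcases lt_or_eq_of_le this with hlt | heq
    · linarith
    · exact absurd heq.symm hne
  have hf1 : (1:ℝ)^3 - a*1^2 - c*1 - (H-3) < 0 := by nlinarith [hprod]
  have hβ1 : 1 < β := key 1 hf1 (by linarith)
  -- β > H - 3
  have hβd : H - 3 < β := by
    rcases le_or_gt (H - 3) 1 with hle | hgt
    · linarith
    · apply key
      · have haH : 0 ≤ (a - 2*H + 1) := by nlinarith [hprod]
        nlinarith [mul_nonneg (mul_nonneg haH (by linarith : (0:ℝ) ≤ H - 3)) (by linarith : (0:ℝ) ≤ H - 3),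
          mul_pos (mul_pos (by linarith : (0:ℝ) < H - 3) (by linarith : (0:ℝ) < H - 3)) (by linarith : (0:ℝ) < H + 2),
          mul_pos (by linarith : (0:ℝ) < c) (by linarith : (0:ℝ) < H - 3)]
      · linarith
  have hβt : β * (β^2 - a*β - c) = H - 3 := by linear_combination hroot
  have ht1 : β^2 - a*β - c < 1 := by nlinarith [hβt, hβd, hβ1]
  have e1 : (1-β)*(1+(β-a)+(β^2-a*β-c)) = 1 - a - c - (H-3) := by linear_combination -hroot
  have hQ1 : 0 < 1+(β-a)+(β^2-a*β-c) := by nlinarith [e1, hf1, hβ1]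
  have e2 : (-1-β)*(1-(β-a)+(β^2-a*β-c)) = -2 := by linear_combination hc - ha - hroot
  have hQm1 : 0 < 1-(β-a)+(β^2-a*β-c) := by nlinarith [e2, hβ1]
  refine ⟨hβ1, ?_⟩
  intro z hz hzβ
  have hrootC : ((β:ℂ))^3 - (a:ℂ)*(β:ℂ)^2 - (c:ℂ)*(β:ℂ) - ((h:ℂ)-3) = 0 := by
    have h1 := congrArg Complex.ofReal hroot
    push_cast at h1
    convert h1 using 2
    simp [hHdef]
  have hfac : (z - (β:ℂ)) * (z^2 + ((β:ℂ)-(a:ℂ))*z + ((β:ℂ)^2 - (a:ℂ)*(β:ℂ) - (c:ℂ))) =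
      z^3 - (a:ℂ)*z^2 - (c:ℂ)*z - ((h:ℂ)-3) := by
    linear_combination -hrootC
  have h0 : (z - (β:ℂ)) * (z^2 + ((β:ℂ)-(a:ℂ))*z + ((β:ℂ)^2 - (a:ℂ)*(β:ℂ) - (c:ℂ))) = 0 := by
    rw [hfac]; exact hz
  have hq : z^2 + ((β:ℂ)-(a:ℂ))*z + ((β:ℂ)^2 - (a:ℂ)*(β:ℂ) - (c:ℂ)) = 0 := by
    rcases mul_eq_zero.mp h0 with hcase | hcase
    · exact absurd (sub_eq_zero.mp hcase) hzβ
    · exact hcase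
  by_cases him : z.im = 0
  · -- real root
    have hzr : ((z.re : ℝ) : ℂ) = z := by
      apply Complex.ext <;> simp [him]
    set r : ℝ := z.re with hrdef
    rw [← hzr] at hq
    have hqr : r^2 + (β-a)*r + (β^2 - a*β - c) = 0 := by exact_mod_cast hq
    rw [← hzr, Complex.norm_real, Real.norm_eq_abs, abs_lt]
    set r' : ℝ := -(β-a) - r with hr'def
    have hA2 : (1-r)*(1-r') > 0 := by
      have : (1-r)*(1-r') = 1+(β-a)+(β^2-a*β-c) := by
        rw [hr'def]; linear_combination -hqr
      rw [this]; exact hQ1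
    have hB2 : (1+r)*(1+r') > 0 := by
      have : (1+r)*(1+r') = 1-(β-a)+(β^2-a*β-c) := by
        rw [hr'def]; linear_combination -hqr
      rw [this]; exact hQm1
    have hC2 : r*r' < 1 := by
      have : r*r' = β^2 - a*β - c := by
        rw [hr'def]; linear_combination -hqr
      rw [this]; exact ht1
    constructor
    · by_contra hcon
      push_neg at hcon
      have hr'1 : -1 < r' := by nlinarith [hB2, hC2]
      nlinarith [hB2, mul_nonneg (by linarith : (0:ℝ) ≤ -(1+r)) (by linarith : (0:ℝ) ≤ 1+r')]
    · by_contra hcon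
      push_neg at hcon
      have hr'1 : r' < 1 := by nlinarith [hA2, hC2]
      nlinarith [hA2, mul_nonneg (by linarith : (0:ℝ) ≤ r - 1) (by linarith : (0:ℝ) ≤ 1-r')]
  · -- nonreal root
    have hqc : (starRingEnd ℂ z)^2 + ((β:ℂ)-(a:ℂ))*(starRingEnd ℂ z) +
        ((β:ℂ)^2 - (a:ℂ)*(β:ℂ) - (c:ℂ)) = 0 := by
      have := congrArg (starRingEnd ℂ) hq
      simpa only [map_add, map_mul, map_pow, map_sub, map_zero, Complex.conj_ofReal] using this
    have hne : starRingEnd ℂ z ≠ z := by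
      rw [Ne, Complex.conj_eq_iff_im]
      exact him
    have hsum : z + starRingEnd ℂ z = (a:ℂ) - (β:ℂ) := by
      have hd : (z - starRingEnd ℂ z) * (z + starRingEnd ℂ z + ((β:ℂ)-(a:ℂ))) = 0 := by
        linear_combination hq - hqc
      rcases mul_eq_zero.mp hd with hcase | hcase
      · exact absurd (sub_eq_zero.mp hcase).symm hne
      · linear_combination hcase
    have hzw : z * starRingEnd ℂ z = (β:ℂ)^2 - (a:ℂ)*(β:ℂ) - (c:ℂ) := by
      linear_combination z * hsum - hq
    rw [Complex.mul_conj] at hzw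
    have hns : Complex.normSq z = β^2 - a*β - c := by exact_mod_cast hzw
    nlinarith [Complex.sq_norm z, norm_nonneg z, hns, ht1]
end

section
/- Let u : ℕ → ℕ be a strictly increasing sequence with u(0) = 1. Then for every natural number n there exists a unique finitely supported function a : ℕ → ℕ such that n = Σᵢ a(i)·u(i) and, for every j, Σ_{i<j} a(i)·u(i) < u(j). -/
private lemma greedy_sum_eq_range (u : ℕ → ℕ) (a : ℕ →₀ ℕ) (N : ℕ)
    (h : ∀ i, N ≤ i → a i = 0) :
    a.sum (fun i c => c * u i) = ∑ i ∈ Finset.range N, a i * u i := by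
  apply Finsupp.sum_of_support_subset
  · intro i hi
    rw [Finset.mem_range]
    by_contra h'
    exact (Finsupp.mem_support_iff.mp hi) (h i (le_of_not_gt h'))
  · intro i _; exact zero_mul _

private lemma greedy_range_sum_trunc (a : ℕ → ℕ) (u : ℕ → ℕ) {M j : ℕ} (hMj : M ≤ j)
    (h : ∀ i, M ≤ i → a i = 0) :
    ∑ i ∈ Finset.range j, a i * u i = ∑ i ∈ Finset.range M, a i * u i := by
  refine (Finset.sum_subset (Finset.range_subset_range.mpr hMj) ?_).symm
  intro i _ hi
  rw [h i (le_of_not_gt (fun hh => hi (Finset.mem_range.mpr hh))), zero_mul]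

private lemma greedy_term_le (u : ℕ → ℕ) (a : ℕ →₀ ℕ) {i : ℕ} (hi : a i ≠ 0) :
    u i ≤ a.sum (fun i c => c * u i) := by
  calc u i ≤ a i * u i := Nat.le_mul_of_pos_left _ (Nat.pos_of_ne_zero hi)
    _ ≤ a.sum (fun i c => c * u i) := by
        exact Finset.single_le_sum (f := fun i => a i * u i)
          (fun i _ => Nat.zero_le _) (Finsupp.mem_support_iff.mpr hi)

/-- Let `u : ℕ → ℕ` be strictly increasing with `u 0 = 1`. Then every natural
number `n` has a unique greedy representation: a finitely supported
`a : ℕ → ℕ` with `n = Σᵢ a i * u i` and, for every `j`,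
`Σ_{i<j} a i * u i < u j`. -/
theorem greedy_representation_exists_unique (u : ℕ → ℕ)
    (hu : StrictMono u) (hu0 : u 0 = 1) (n : ℕ) :
    ∃! a : ℕ →₀ ℕ,
      n = a.sum (fun i c => c * u i) ∧
      ∀ j : ℕ, ∑ i ∈ Finset.range j, a i * u i < u j := by
  have hupos : ∀ j, 0 < u j := by
    intro j
    have : u 0 ≤ u j := hu.monotone (Nat.zero_le j)
    omega
  induction n using Nat.strong_induction_on with
  | _ n IH =>
    rcases Nat.eq_zero_or_pos n with hn | hn
    · subst hn
      refine ⟨0, ⟨by simp, fun j => by simpa using hupos j⟩, ?_⟩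
      rintro c ⟨hc1, _⟩
      ext i
      by_contra h
      have := greedy_term_le u c h
      have := hupos i
      omega
    · -- k = largest index with u k ≤ n
      set P : ℕ → Prop := fun k => u k ≤ n with hP
      have hP0 : P 0 := by simp [hP, hu0]; omega
      set k := Nat.findGreatest P n with hk
      have hukn : u k ≤ n := Nat.findGreatest_spec (Nat.zero_le n) hP0
      have hnk1 : n < u (k + 1) := by
        rcases le_or_gt (k + 1) n with h | h
        · have := Nat.findGreatest_is_greatest (Nat.lt_succ_self k) h
          simpa [hP] using (by omega : ¬ P (k+1) → n < u (k+1)) this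
        · have : k + 1 ≤ u (k + 1) := hu.le_apply
          omega
      have hukpos := hupos k
      set q := n / u k with hq
      set r := n % u k with hr
      have hrk : r < u k := Nat.mod_lt _ hukpos
      have hrn : r < n := by omega
      obtain ⟨b, ⟨hb1, hb2⟩, hbu⟩ := IH r hrn
      -- b vanishes at indices ≥ k
      have hbz : ∀ i, k ≤ i → b i = 0 := by
        intro i hi
        by_contra h
        have h1 := greedy_term_le u b h
        have h2 : u k ≤ u i := hu.monotone hi
        omega
      set a : ℕ →₀ ℕ := b + Finsupp.single k q with ha
      have haz : ∀ i, k + 1 ≤ i → a i = 0 := by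
        intro i hi
        show (b + Finsupp.single k q) i = 0
        rw [Finsupp.add_apply, hbz i (by omega),
          Finsupp.single_eq_of_ne (by omega : i ≠ k)]
        rfl
      have hak : a k = q := by simp [ha, hbz k le_rfl]
      have halt : ∀ i, i < k → a i = b i := by
        intro i hi
        show (b + Finsupp.single k q) i = b i
        rw [Finsupp.add_apply, Finsupp.single_eq_of_ne (by omega : i ≠ k), add_zero]
      have hbsum : ∀ j, k ≤ j → ∑ i ∈ Finset.range j, b i * u i = r := by
        intro j hj
        rw [greedy_range_sum_trunc _ u hj hbz, ← greedy_sum_eq_range u b k hbz, hb1]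
      have hasum : ∀ j, k + 1 ≤ j → ∑ i ∈ Finset.range j, a i * u i = n := by
        intro j hj
        rw [greedy_range_sum_trunc _ u hj haz, Finset.sum_range_succ, hak]
        have : ∑ i ∈ Finset.range k, a i * u i = r := by
          rw [Finset.sum_congr rfl (fun i hi => by
            rw [halt i (Finset.mem_range.mp hi)])]
          exact hbsum k le_rfl
        rw [this, hq, hr]
        exact (Nat.mod_add_div' n (u k))
      have hacond : ∀ j, ∑ i ∈ Finset.range j, a i * u i < u j := by
        intro j
        rcases le_or_gt (k + 1) j with h | h
        · rw [hasum j h]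
          exact lt_of_lt_of_le hnk1 (hu.monotone h)
        · have : ∑ i ∈ Finset.range j, a i * u i = ∑ i ∈ Finset.range j, b i * u i := by
            refine Finset.sum_congr rfl (fun i hi => ?_)
            rw [halt i (by have := Finset.mem_range.mp hi; omega)]
          rw [this]; exact hb2 j
      refine ⟨a, ⟨?_, hacond⟩, ?_⟩
      · rw [greedy_sum_eq_range u a (k+1) haz, hasum (k+1) le_rfl]
      · -- uniqueness
        rintro c ⟨hc1, hc2⟩
        have hcz : ∀ i, k + 1 ≤ i → c i = 0 := by
          intro i hi
          by_contra h
          have h1 := greedy_term_le u c h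
          have h2 : u (k+1) ≤ u i := hu.monotone hi
          omega
        have hcsplit : c k * u k + ∑ i ∈ Finset.range k, c i * u i = n := by
          have := greedy_sum_eq_range u c (k+1) hcz
          rw [hc1, this, Finset.sum_range_succ]; ring
        have hlow : ∑ i ∈ Finset.range k, c i * u i < u k := hc2 k
        have hdm : n / u k = c k ∧ n % u k = ∑ i ∈ Finset.range k, c i * u i :=
          (Nat.div_mod_unique hukpos).mpr
            ⟨by rw [Nat.mul_comm (u k) (c k)]; omega, hlow⟩
        have hck : c k = q ∧ ∑ i ∈ Finset.range k, c i * u i = r :=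
          ⟨by rw [hq]; exact hdm.1.symm, by rw [hr]; exact hdm.2.symm⟩
        -- erase k from c gives a greedy rep of r
        have hez : ∀ i, k ≤ i → (c.erase k) i = 0 := by
          intro i hi
          rcases eq_or_lt_of_le hi with h | h
          · rw [← h, Finsupp.erase_same]
          · rw [Finsupp.erase_ne (by omega)]
            exact hcz i h
        have hesum : r = (c.erase k).sum (fun i c => c * u i) := by
          rw [greedy_sum_eq_range u _ k hez, ← hck.2]
          refine Finset.sum_congr rfl (fun i hi => ?_)
          rw [Finsupp.erase_ne (by have := Finset.mem_range.mp hi; omega)]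
        have hecond : ∀ j, ∑ i ∈ Finset.range j, (c.erase k) i * u i < u j := by
          intro j
          rcases le_or_gt j k with h | h
          · have : ∑ i ∈ Finset.range j, (c.erase k) i * u i
                = ∑ i ∈ Finset.range j, c i * u i := by
              refine Finset.sum_congr rfl (fun i hi => ?_)
              rw [Finsupp.erase_ne (by have := Finset.mem_range.mp hi; omega)]
            rw [this]; exact hc2 j
          · rw [greedy_range_sum_trunc _ u (by omega : k ≤ j) hez]
            have : ∑ i ∈ Finset.range k, (c.erase k) i * u i
                = ∑ i ∈ Finset.range k, c i * u i := by
              refine Finset.sum_congr rfl (fun i hi => ?_)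
              rw [Finsupp.erase_ne (by have := Finset.mem_range.mp hi; omega)]
            rw [this, hck.2]
            exact lt_of_lt_of_le hrk (hu.monotone (by omega))
        have heb : c.erase k = b := hbu (c.erase k) ⟨hesum, hecond⟩
        ext i
        rcases lt_trichotomy i k with h | h | h
        · rw [halt i h, ← heb, Finsupp.erase_ne (by omega)]
        · subst h; rw [hak, hck.1]
        · rw [haz i (by omega), hcz i (by omega)]
end

section
/- Let p and h be integers with p ≥ 5 and h ≥ 4, set a = (p−3)(h−1)+1, and define u : ℕ → ℕ by u₀ = 1, u₁ = a, and u_{n+2} = a·u_{n+1} + (h−3)·u_n. Then every natural number n can be written as n = Σᵢ a(i)·u(i) for some finitely supported function a : ℕ → ℕ with a(i) ≤ (p−3)(h−1)+1 for all i. -/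
/-- For `p ≥ 5`, `h ≥ 4`, with `a = (p-3)(h-1)+1` and the sequence `u 0 = 1`,
`u 1 = a`, `u (n+2) = a·u (n+1) + (h-3)·u n`, every natural number `n` can be
written `n = Σᵢ d i * u i` with digits `d i ≤ (p-3)(h-1)+1`. -/
theorem representation_with_bounded_digits (p h : ℕ) (hp : 5 ≤ p) (hh : 4 ≤ h)
    (a : ℕ) (ha : a = (p - 3) * (h - 1) + 1)
    (u : ℕ → ℕ) (hu0 : u 0 = 1) (hu1 : u 1 = a)
    (hrec : ∀ n, u (n + 2) = a * u (n + 1) + (h - 3) * u n) :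
    ∀ n : ℕ, ∃ d : ℕ →₀ ℕ,
      n = d.sum (fun i c => c * u i) ∧
      ∀ i : ℕ, d i ≤ (p - 3) * (h - 1) + 1 := by
  have hp3 : 2 ≤ p - 3 := by omega
  have hh1 : 3 ≤ h - 1 := by omega
  have ha7 : 7 ≤ a := by
    have := Nat.mul_le_mul hp3 hh1
    omega
  have hh3a : h - 3 ≤ a := by
    have : 1 * (h - 1) ≤ (p - 3) * (h - 1) := Nat.mul_le_mul_right _ (by omega)
    omega
  have hpos : ∀ n, 0 < u n := by
    intro n
    induction n using Nat.strong_induction_on with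
    | _ n ih =>
      match n with
      | 0 => simp [hu0]
      | 1 => rw [hu1]; omega
      | n + 2 =>
        rw [hrec]
        have h1 := ih (n + 1) (by omega)
        have h2 : 0 < a * u (n + 1) := Nat.mul_pos (by omega) h1
        omega
  have hstep : ∀ n, u n < u (n + 1) := by
    intro n
    match n with
    | 0 => rw [hu0, hu1]; omega
    | m + 1 =>
      rw [hrec]
      have h1 := hpos (m + 1)
      have h2 : 2 * u (m + 1) ≤ a * u (m + 1) := Nat.mul_le_mul_right _ (by omega)
      omega
  have hub : ∀ n, n + 1 ≤ u n := by
    intro n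
    induction n with
    | zero => simp [hu0]
    | succ n ih => have := hstep n; omega
  have hmono : StrictMono u := strictMono_nat_of_lt_succ hstep
  have haux : ∀ m, (h - 3) * u m ≤ u (m + 1) := by
    intro m
    match m with
    | 0 => rw [hu0, hu1]; omega
    | m + 1 =>
      rw [hrec]
      have : (h - 3) * u (m + 1) ≤ a * u (m + 1) := Nat.mul_le_mul_right _ hh3a
      omega
  have hbd : ∀ k, u (k + 1) ≤ (a + 1) * u k := by
    intro k
    match k with
    | 0 => rw [hu0, hu1]; omega
    | m + 1 =>
      calc u (m + 2) = a * u (m + 1) + (h - 3) * u m := hrec m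
        _ ≤ a * u (m + 1) + u (m + 1) := Nat.add_le_add_left (haux m) _
        _ = (a + 1) * u (m + 1) := by ring
  suffices H : ∀ n : ℕ, ∃ d : ℕ →₀ ℕ,
      n = d.sum (fun i c => c * u i) ∧ (∀ i, d i ≤ (p - 3) * (h - 1) + 1) ∧
      (∀ i, d i ≠ 0 → u i ≤ n) by
    intro n; obtain ⟨d, h1, h2, _⟩ := H n; exact ⟨d, h1, h2⟩
  intro n
  induction n using Nat.strong_induction_on with
  | _ n ih =>
    rcases Nat.eq_zero_or_pos n with h0 | h0
    · exact ⟨0, by simp [h0], fun i => by simp, fun i hi => by simp at hi⟩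
    · set k := Nat.findGreatest (fun k => u k ≤ n) n with hk
      have hk1 : u k ≤ n :=
        Nat.findGreatest_spec (P := fun k => u k ≤ n) (m := 0) (by omega) (by show u 0 ≤ n; rw [hu0]; omega)
      have hkle : k ≤ n := Nat.findGreatest_le n
      have hkn : k < n := by
        rcases Nat.lt_or_ge k n with h | h
        · exact h
        · exfalso; have := hub n
          have hkn' : k = n := by omega
          rw [hkn'] at hk1; omega
      have hk2 : n < u (k + 1) := by
        by_contra hcon
        push_neg at hcon
        have hle : k + 1 ≤ n := by have := hub (k + 1); omega
        exact Nat.findGreatest_is_greatest (P := fun k => u k ≤ n) (by omega) hle hcon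
      set q := n / u k with hq
      set r := n % u k with hr
      have hqa : q ≤ a := by
        have hlt : n < (a + 1) * u k := lt_of_lt_of_le hk2 (hbd k)
        have := (Nat.div_lt_iff_lt_mul (hpos k)).mpr hlt
        omega
      have hrlt : r < u k := Nat.mod_lt _ (hpos k)
      obtain ⟨d, hd, hdb, hds⟩ := ih r (by omega)
      have hdk : d k = 0 := by
        by_contra hc
        have := hds k hc
        omega
      refine ⟨d + Finsupp.single k q, ?_, ?_, ?_⟩
      · rw [Finsupp.sum_add_index' (by intro i; simp) (by intro i b1 b2; ring)]
        rw [Finsupp.sum_single_index (by simp)]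
        have h1 := Nat.div_add_mod n (u k)
        rw [← hq, ← hr] at h1
        have h2 : u k * q = q * u k := mul_comm _ _
        omega
      · intro i
        rcases eq_or_ne i k with rfl | hik
        · simp only [Finsupp.add_apply, hdk, Finsupp.single_eq_same, zero_add]
          exact ha ▸ hqa
        · simp only [Finsupp.add_apply, Finsupp.single_eq_of_ne' (Ne.symm hik), add_zero]
          exact hdb i
      · intro i hi
        simp only [Finsupp.add_apply] at hi
        rcases eq_or_ne i k with rfl | hik
        · exact hk1
        · have : Finsupp.single k q i = 0 := Finsupp.single_eq_of_ne' (Ne.symm hik)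
          have hdi : d i ≠ 0 := by omega
          have := hds i hdi
          omega
end
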